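/- For every α ∈ [0,1], all reals p > 1 and q ≥ 1, every integer m ≥ 1, and every t ≥ 0, the probability under δ₁ Stav^t that the components at positions 1, …, m are all 0 is at most p^{−2m} · Σ_{n=1}^∞ (S_1(n) + S_2(n) + S_3(n)), where the right-hand side is interpreted as an element of [0, ∞]. -/

import Mathlib

open MeasureTheory Filter

noncomputable section

/-- The state of the Stavskaya process at time `t`, started from the all-ones
configuration, driven by the noise field `ξ : ℤ × ℕ → Bool` (`ξ (i, s) = false` means
vertex `i` is killed at step `s`; this happens with probability `α`, i.i.d.). -/
def stavState : ℕ → ((ℤ × ℕ) → Bool) → ℤ → Bool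
  | 0, _, _ => true
  | t + 1, ω, i => (stavState t ω i || stavState t ω (i + 1)) && ω (i, t + 1)

/-- `P` is the law of an i.i.d. field `(ω_{j,s})_{(j,s) ∈ ℤ × ℕ}` of `{0,1}`-valued random
variables with `P(ω_{j,s} = 1) = 1 - α`. -/
def IsBernoulliNoise (α : ℝ) (P : Measure ((ℤ × ℕ) → Bool)) : Prop :=
  IsProbabilityMeasure P ∧
    ∀ (s : Finset (ℤ × ℕ)) (b : (ℤ × ℕ) → Bool),
      P {ω | ∀ v ∈ s, ω v = b v} =
        ∏ v ∈ s, ENNReal.ofReal (if b v then 1 - α else α)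

/-- The law at time `t` of the Stavskaya process with parameter `α` started from the
all-ones configuration (`δ₁ Stav^t`), the driving noise having law `P`. -/
def stavLaw (P : Measure ((ℤ × ℕ) → Bool)) (t : ℕ) : Measure (ℤ → Bool) :=
  P.map (stavState t)

/-- Displacements of the three step types: type 1 ↦ (−1,−1), type 2 ↦ (2,0),
type 3 ↦ (−1,1).  Type `r` (`r ∈ {1,2,3}`) is encoded as `(r - 1 : Fin 3)`. -/
def stepDisp : Fin 3 → ℤ × ℤ := ![(-1, -1), (2, 0), (-1, 1)]

/-- The endpoint of the path (started at the origin) with steps `w`. -/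
def endpointOf {n : ℕ} (w : Fin n → Fin 3) : ℤ × ℤ := ∑ s, stepDisp (w s)

/-- A path is *nice* when its sequence of types contains no consecutive factor
`13`, `31`, `123` or `321` (types 1,2,3 are encoded as `0,1,2 : Fin 3`). -/
def NicePath {n : ℕ} (w : Fin n → Fin 3) : Prop :=
  ∀ k : ℕ,
    (∀ h : k + 1 < n,
      ¬(w ⟨k, by omega⟩ = 0 ∧ w ⟨k + 1, h⟩ = 2) ∧
      ¬(w ⟨k, by omega⟩ = 2 ∧ w ⟨k + 1, h⟩ = 0)) ∧
    (∀ h : k + 2 < n,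
      ¬(w ⟨k, by omega⟩ = 0 ∧ w ⟨k + 1, by omega⟩ = 1 ∧ w ⟨k + 2, h⟩ = 2) ∧
      ¬(w ⟨k, by omega⟩ = 2 ∧ w ⟨k + 1, by omega⟩ = 1 ∧ w ⟨k + 2, h⟩ = 0))

/-- The weight of a path: `α ^ (number of type-2 steps)`. -/
def pathWeight (α : ℝ) {n : ℕ} (w : Fin n → Fin 3) : ℝ :=
  α ^ (Finset.univ.filter fun s => w s = 1).card

open Classical in
/-- `Spath α i t n r` is `S_r(i,t,n)`: the sum of weights of all nice paths of length `n`
ending at `(i, t)` whose last step has type `r` (type `r+1` in the 1,2,3 numbering). -/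
def Spath (α : ℝ) (i t : ℤ) (n : ℕ) (r : Fin 3) : ℝ :=
  ∑ w ∈ Finset.univ.filter
      (fun w : Fin n → Fin 3 =>
        NicePath w ∧ endpointOf w = (i, t) ∧ ∀ h : n - 1 < n, w ⟨n - 1, h⟩ = r),
    pathWeight α w

/-- `Sgen α p q r n` is `S_r(n) = Σ_{i,t ∈ ℤ} p^i q^t S_r(i,t,n)` (a finite sum, since
only finitely many pairs `(i,t)` carry a nice path of length `n`). -/
def Sgen (α p q : ℝ) (r : Fin 3) (n : ℕ) : ℝ :=
  ∑' (i : ℤ) (t : ℤ), p ^ i * q ^ t * Spath α i t n r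

namespace StavC

/-- Pure walk step on states `(column, level)` determined by a letter. -/
def app (X : ℤ × ℕ) (a : Fin 3) : ℤ × ℕ :=
  if a = 0 then (X.1, X.2 - 1) else if a = 1 then (X.1 + 1, X.2) else (X.1 - 1, X.2 + 1)

/-- The list of kill sites determined by a word, walking from `X`. -/
def killsR : ℤ × ℕ → List (Fin 3) → List (ℤ × ℕ)
  | _, [] => []
  | X, a :: l => if a = 1 then app X 1 :: killsR (app X 1) l else killsR (app X a) l

/-- All states visited by a walk. -/
def statesL : ℤ × ℕ → List (Fin 3) → List (ℤ × ℕ)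
  | X, [] => [X]
  | X, a :: l => X :: statesL (app X a) l

def endL (l : List (Fin 3)) : ℤ × ℤ := (l.map stepDisp).sum

/-- No factor 13, 31, 123, 321 (letters 0,1,2). -/
def NiceG (l : List (Fin 3)) : Prop :=
  ∀ k : ℕ,
    ¬(l[k]? = some 0 ∧ l[k + 1]? = some 2) ∧
    ¬(l[k]? = some 2 ∧ l[k + 1]? = some 0) ∧
    ¬(l[k]? = some 0 ∧ l[k + 1]? = some 1 ∧ l[k + 2]? = some 2) ∧
    ¬(l[k]? = some 2 ∧ l[k + 1]? = some 1 ∧ l[k + 2]? = some 0)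

lemma killsR_length (X : ℤ × ℕ) (l : List (Fin 3)) :
    (killsR X l).length = l.count 1 := by
  induction l generalizing X with
  | nil => simp [killsR]
  | cons a l ih =>
    by_cases h : a = 1 <;> simp [killsR, h, ih, List.count_cons]

lemma statesL_eq_cons (X : ℤ × ℕ) (l : List (Fin 3)) :
    statesL X l = X :: (statesL X l).tail := by
  cases l <;> rfl

lemma killsR_sublist_tail (X : ℤ × ℕ) (l : List (Fin 3)) :
    (killsR X l).Sublist (statesL X l).tail := by
  induction l generalizing X with
  | nil => simp [killsR, statesL]
  | cons a l ih =>
    by_cases h : a = 1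
    · subst h
      have := List.Sublist.cons₂ (app X 1) (ih (app X 1))
      rw [← statesL_eq_cons] at this
      simpa [killsR, statesL] using this
    · have h2 : (statesL (app X a) l).tail.Sublist (statesL (app X a) l) :=
        List.tail_sublist _
      simpa [killsR, statesL, h] using ((ih (app X a)).trans h2)

lemma statesL_length (X : ℤ × ℕ) (l : List (Fin 3)) :
    (statesL X l).length = l.length + 1 := by
  induction l generalizing X with
  | nil => simp [statesL]
  | cons a l ih => simp [statesL, ih]

end StavC

section PartB
namespace StavC

variable (ω : (ℤ × ℕ) → Bool) (m t : ℕ)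

/-- Spread of the surviving part of `S` one time-step down. -/
def spread (S : Finset ℤ) (s : ℕ) : Finset ℤ :=
  (S.filter (fun c => ω (c, s) = true)).biUnion (fun c => {c, c + 1})

def Aaux : ℕ → Finset ℤ
  | 0 => Finset.Icc 1 (m : ℤ)
  | d + 1 => spread ω (Aaux d) (t - d)

/-- The region's level sets: `Aset s` is the dead set used at level `s`. -/
def Aset (s : ℕ) : Finset ℤ := Aaux ω m t (t - s)

lemma Aset_t : Aset ω m t t = Finset.Icc 1 (m : ℤ) := by
  simp [Aset, Nat.sub_self, Aaux]

lemma Aset_pred {s : ℕ} (h : s + 1 ≤ t) :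
    Aset ω m t s = spread ω (Aset ω m t (s + 1)) (s + 1) := by
  have h1 : t - s = (t - (s + 1)) + 1 := by omega
  have h2 : t - (t - (s + 1) ) = s + 1 := by omega
  rw [Aset, h1, Aaux, h2, Aset]

lemma mem_spread_of {S : Finset ℤ} {c : ℤ} {s : ℕ} (hc : c ∈ S) (hal : ω (c, s) = true) :
    c ∈ spread ω S s ∧ c + 1 ∈ spread ω S s := by
  constructor <;>
  · rw [spread, Finset.mem_biUnion]
    exact ⟨c, Finset.mem_filter.2 ⟨hc, hal⟩, by simp⟩

/-- The event: all of `1..m` dead at time `t`. -/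
def Ev : Prop := ∀ i : ℤ, 1 ≤ i → i ≤ (m : ℤ) → stavState t ω i = false

lemma dead_Aaux (hev : Ev ω m t) :
    ∀ d, d ≤ t → ∀ c ∈ Aaux ω m t d, stavState (t - d) ω c = false := by
  intro d
  induction d with
  | zero =>
    intro _ c hc
    rw [Aaux, Finset.mem_Icc] at hc
    simpa using hev c hc.1 hc.2
  | succ d ih =>
    intro hd c hc
    rw [Aaux, spread, Finset.mem_biUnion] at hc
    obtain ⟨c', hc', hmem⟩ := hc
    rw [Finset.mem_filter] at hc'
    have hdead : stavState (t - d) ω c' = false := ih (by omega) c' hc'.1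
    have h1 : t - d = (t - (d + 1)) + 1 := by omega
    rw [h1, stavState] at hdead
    rw [← h1] at hdead
    rw [hc'.2, Bool.and_true, Bool.or_eq_false_iff] at hdead
    simp only [Finset.mem_insert, Finset.mem_singleton] at hmem
    rcases hmem with rfl | rfl
    · exact hdead.1
    · exact hdead.2

lemma dead_Aset (hev : Ev ω m t) {s : ℕ} (hs : s ≤ t) {c : ℤ} (hc : c ∈ Aset ω m t s) :
    stavState s ω c = false := by
  have := dead_Aaux ω m t hev (t - s) (by omega) c hc
  rwa [show t - (t - s) = s by omega] at this

lemma not_mem_A0 (hev : Ev ω m t) {c : ℤ} (hc : c ∈ Aset ω m t 0) : False := by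
  have := dead_Aset ω m t hev (Nat.zero_le t) hc
  simp [stavState] at this

lemma alive_level (hev : Ev ω m t) {s : ℕ} {c : ℤ} (hs : s ≤ t)
    (hc : c ∈ Aset ω m t s) (hal : ω (c, s) = true) : 2 ≤ s := by
  match s with
  | 0 => exact absurd hc (fun h => not_mem_A0 ω m t hev h)
  | 1 =>
    exfalso
    have h01 : (0:ℕ) + 1 ≤ t := hs
    have := (mem_spread_of ω hc hal).1
    rw [← Aset_pred ω m t h01] at this
    exact not_mem_A0 ω m t hev this
  | (n+2) => omega

end StavC
end PartB

section PartC
namespace StavC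

variable (ω : (ℤ × ℕ) → Bool) (m t : ℕ)

/-- The deterministic boundary-walk machine. -/
def mstep (X : ℤ × ℕ) : Option (Fin 3 × (ℤ × ℕ)) :=
  if (X.1 + 1) ∈ Aset ω m t X.2 then
    if ω (X.1 + 1, X.2) = true then some (0, (X.1, X.2 - 1))
    else some (1, (X.1 + 1, X.2))
  else if X.2 < t then some (2, (X.1 - 1, X.2 + 1)) else none

lemma mstep_D {X : ℤ × ℕ} (h1 : (X.1 + 1) ∈ Aset ω m t X.2) (h2 : ω (X.1 + 1, X.2) = true) :
    mstep ω m t X = some (0, (X.1, X.2 - 1)) := by simp [mstep, h1, h2]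

lemma mstep_R {X : ℤ × ℕ} (h1 : (X.1 + 1) ∈ Aset ω m t X.2) (h2 : ω (X.1 + 1, X.2) = false) :
    mstep ω m t X = some (1, (X.1 + 1, X.2)) := by simp [mstep, h1, h2]

lemma mstep_U {X : ℤ × ℕ} (h1 : (X.1 + 1) ∉ Aset ω m t X.2) (h2 : X.2 < t) :
    mstep ω m t X = some (2, (X.1 - 1, X.2 + 1)) := by simp [mstep, h1, h2]

lemma mstep_none {X : ℤ × ℕ} (h1 : (X.1 + 1) ∉ Aset ω m t X.2) (h2 : ¬ X.2 < t) :
    mstep ω m t X = none := by simp [mstep, h1, h2]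

lemma mstep_inv {X : ℤ × ℕ} {a : Fin 3} {Y : ℤ × ℕ} (h : mstep ω m t X = some (a, Y)) :
    (a = 0 ∧ (X.1 + 1) ∈ Aset ω m t X.2 ∧ ω (X.1 + 1, X.2) = true ∧ Y = (X.1, X.2 - 1)) ∨
    (a = 1 ∧ (X.1 + 1) ∈ Aset ω m t X.2 ∧ ω (X.1 + 1, X.2) = false ∧ Y = (X.1 + 1, X.2)) ∨
    (a = 2 ∧ (X.1 + 1) ∉ Aset ω m t X.2 ∧ X.2 < t ∧ Y = (X.1 - 1, X.2 + 1)) := by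
  unfold mstep at h
  split_ifs at h with h1 h2 h3 <;> simp at h
  · exact Or.inl ⟨h.1.symm, h1, h2, h.2.symm⟩
  · exact Or.inr (Or.inl ⟨h.1.symm, h1, by simpa using h2, h.2.symm⟩)
  · exact Or.inr (Or.inr ⟨h.1.symm, h1, h3, h.2.symm⟩)

lemma mstep_app {X : ℤ × ℕ} {a : Fin 3} {Y : ℤ × ℕ} (h : mstep ω m t X = some (a, Y)) :
    Y = app X a := by
  rcases mstep_inv ω m t h with ⟨ha, _, _, hY⟩ | ⟨ha, _, _, hY⟩ | ⟨ha, _, _, hY⟩ <;>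
    subst ha <;> simp [app, hY]

/-- A run of the machine. -/
inductive Run : ℤ × ℕ → List (Fin 3) → ℤ × ℕ → Prop
  | nil (X : ℤ × ℕ) : Run X [] X
  | cons {X : ℤ × ℕ} {a : Fin 3} {Y : ℤ × ℕ} {l : List (Fin 3)} {Z : ℤ × ℕ} :
      mstep ω m t X = some (a, Y) → Run Y l Z → Run X (a :: l) Z

lemma Run.append {X Y Z : ℤ × ℕ} {l₁ l₂ : List (Fin 3)}
    (h1 : Run ω m t X l₁ Y) (h2 : Run ω m t Y l₂ Z) : Run ω m t X (l₁ ++ l₂) Z := by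
  induction h1 with
  | nil => exact h2
  | cons hs _ ih => exact .cons hs (ih h2)

/-- Derivations: processing level `s` from column `j`, ending at column `y`. -/
inductive Proc : ℕ → ℤ → List (Fin 3) → ℤ → Prop
  | done {s : ℕ} {j : ℤ} : (j + 1) ∉ Aset ω m t s → Proc s j [] j
  | kill {s : ℕ} {j y : ℤ} {w : List (Fin 3)} :
      (j + 1) ∈ Aset ω m t s → ω (j + 1, s) = false →
      Proc s (j + 1) w y → Proc s j (1 :: w) y
  | desc {s : ℕ} {j y₁ y : ℤ} {w₁ w₂ : List (Fin 3)} :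
      1 ≤ s → s ≤ t → (j + 1) ∈ Aset ω m t s → ω (j + 1, s) = true →
      Proc (s - 1) j w₁ y₁ → Proc s (y₁ - 1) w₂ y →
      Proc s j (0 :: w₁ ++ 2 :: w₂) y

lemma Proc.le_exit {s : ℕ} {j y : ℤ} {w : List (Fin 3)} (h : Proc ω m t s j w y) :
    j ≤ y ∧ (y + 1) ∉ Aset ω m t s := by
  induction h with
  | done hmem => exact ⟨le_refl _, hmem⟩
  | kill hmem hk hsub ih => exact ⟨by omega, ih.2⟩
  | @desc s' j' y₁' y' w₁' w₂' hs1 hst hmem hal h1 h2 ih1 ih2 =>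
    refine ⟨?_, ih2.2⟩
    have hsp : Aset ω m t (s' - 1) = spread ω (Aset ω m t ((s'-1) + 1)) ((s'-1) + 1) :=
      Aset_pred ω m t (by omega)
    rw [show (s' - 1) + 1 = s' by omega] at hsp
    have hmm := mem_spread_of ω hmem hal
    rw [← hsp] at hmm
    -- y₁ ≥ j + 2
    have h1' := ih1.1
    have h1e := ih1.2
    have hne1 : y₁' ≠ j' := by rintro rfl; exact h1e hmm.1
    have hne2 : y₁' ≠ j' + 1 := by rintro rfl; exact h1e hmm.2
    omega

/-- In the context of `desc`, the lower excursion ends at least two to the right. -/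
lemma proc_y1_ge {s : ℕ} {j y₁ : ℤ} {w₁ : List (Fin 3)}
    (hs1 : 1 ≤ s) (hst : s ≤ t) (hmem : (j + 1) ∈ Aset ω m t s) (hal : ω (j + 1, s) = true)
    (h1 : Proc ω m t (s - 1) j w₁ y₁) : j + 2 ≤ y₁ := by
  have hsp : Aset ω m t (s - 1) = spread ω (Aset ω m t ((s-1) + 1)) ((s-1) + 1) :=
    Aset_pred ω m t (by omega)
  rw [show (s - 1) + 1 = s by omega] at hsp
  have hmm := mem_spread_of ω hmem hal
  rw [← hsp] at hmm
  have h1' := (Proc.le_exit ω m t h1).1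
  have h1e := (Proc.le_exit ω m t h1).2
  have hne1 : y₁ ≠ j := by rintro rfl; exact h1e hmm.1
  have hne2 : y₁ ≠ j + 1 := by rintro rfl; exact h1e hmm.2
  omega

lemma filter_card_lt {S : Finset ℤ} {j k x : ℤ} (hx : x ∈ S) (h1 : j < x) (h2 : x ≤ k) :
    (S.filter (fun c => k < c)).card < (S.filter (fun c => j < c)).card := by
  have hxm : x ∈ S.filter (fun c => j < c) := Finset.mem_filter.2 ⟨hx, h1⟩
  have hsub : S.filter (fun c => k < c) ⊆ (S.filter (fun c => j < c)).erase x := by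
    intro c hc
    rw [Finset.mem_filter] at hc
    rw [Finset.mem_erase, Finset.mem_filter]
    exact ⟨by omega, hc.1, by omega⟩
  calc (S.filter (fun c => k < c)).card
      ≤ ((S.filter (fun c => j < c)).erase x).card := Finset.card_le_card hsub
    _ < (S.filter (fun c => j < c)).card := Finset.card_erase_lt_of_mem hxm

lemma proc_exists (hev : Ev ω m t) :
    ∀ s, s ≤ t → ∀ j : ℤ, ∃ w y, Proc ω m t s j w y := by
  intro s
  induction s using Nat.strong_induction_on with
  | _ s ihs =>
  intro hst j
  suffices H : ∀ N : ℕ, ∀ j : ℤ, ((Aset ω m t s).filter (fun c => j < c)).card ≤ N →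
      ∃ w y, Proc ω m t s j w y from H _ j le_rfl
  intro N
  induction N with
  | zero =>
    intro j hcard
    by_cases hmem : (j + 1) ∈ Aset ω m t s
    · exfalso
      have : (j+1) ∈ (Aset ω m t s).filter (fun c => j < c) :=
        Finset.mem_filter.2 ⟨hmem, by omega⟩
      have := Finset.card_pos.2 ⟨_, this⟩
      omega
    · exact ⟨[], j, .done hmem⟩
  | succ N ihN =>
    intro j hcard
    by_cases hmem : (j + 1) ∈ Aset ω m t s
    · by_cases hal : ω (j + 1, s) = true
      · have hs2 : 2 ≤ s := alive_level ω m t hev hst hmem hal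
        obtain ⟨w₁, y₁, h1⟩ := ihs (s - 1) (by omega) (by omega) j
        have hy1 : j + 2 ≤ y₁ := proc_y1_ge ω m t (by omega) hst hmem hal h1
        obtain ⟨w₂, y, h2⟩ := ihN (y₁ - 1) (by
          have := filter_card_lt (S := Aset ω m t s) (j := j) (k := y₁ - 1) (x := j + 1)
            hmem (by omega) (by omega)
          omega)
        exact ⟨_, y, .desc (by omega) hst hmem hal h1 h2⟩
      · obtain ⟨w, y, h⟩ := ihN (j + 1) (by
          have := filter_card_lt (S := Aset ω m t s) (j := j) (k := j + 1) (x := j + 1)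
            hmem (by omega) (by omega)
          omega)
        exact ⟨_, y, .kill hmem (by simpa using hal) h⟩
    · exact ⟨[], j, .done hmem⟩

lemma Proc.run {s : ℕ} {j y : ℤ} {w : List (Fin 3)} (h : Proc ω m t s j w y) (hst : s ≤ t) :
    Run ω m t (j, s) w (y, s) := by
  induction h with
  | done hmem => exact .nil _
  | kill hmem hk _ ih => exact .cons (mstep_R ω m t hmem hk) (ih hst)
  | @desc s j y₁ y w₁ w₂ hs1 hst' hmem hal h1 h2 ih1 ih2 =>
    refine .cons (mstep_D ω m t hmem hal) (Run.append ω m t (ih1 (by omega)) ?_)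
    have hu : mstep ω m t (y₁, s - 1) = some (2, (y₁ - 1, (s - 1) + 1)) :=
      mstep_U ω m t (by simpa using (Proc.le_exit ω m t h1).2) (by omega)
    rw [show (s - 1) + 1 = s by omega] at hu
    exact .cons hu (ih2 hst')

end StavC
end PartC

section PartD
namespace StavC

variable (ω : (ℤ × ℕ) → Bool) (m t : ℕ)

lemma mstep_level (hev : Ev ω m t) {X : ℤ × ℕ} {a : Fin 3} {Y : ℤ × ℕ}
    (h : mstep ω m t X = some (a, Y)) (h1 : 1 ≤ X.2) (h2 : X.2 ≤ t) :
    1 ≤ Y.2 ∧ Y.2 ≤ t := by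
  rcases mstep_inv ω m t h with ⟨_, hm, hal, hY⟩ | ⟨_, hm, hal, hY⟩ | ⟨_, hm, hlt, hY⟩
  · have := alive_level ω m t hev h2 hm hal
    subst hY; constructor <;> simp <;> omega
  · subst hY; exact ⟨h1, h2⟩
  · subst hY; constructor <;> simp <;> omega

lemma run_kills (hev : Ev ω m t) {X : ℤ × ℕ} {l : List (Fin 3)} {Z : ℤ × ℕ}
    (h : Run ω m t X l Z) : 1 ≤ X.2 → X.2 ≤ t → ∀ v ∈ killsR X l, ω v = false := by
  induction h with
  | nil => simp [killsR]
  | @cons X a Y l Z hs hr ih =>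
    intro h1 h2
    have hY := mstep_level ω m t hev hs h1 h2
    have happ := mstep_app ω m t hs
    rcases mstep_inv ω m t hs with ⟨ha, hm, hal, hY'⟩ | ⟨ha, hm, hal, hY'⟩ | ⟨ha, hm, hlt, hY'⟩
    · subst ha
      intro v hv
      rw [killsR] at hv
      simp only [show (0 : Fin 3) ≠ 1 by decide, if_neg] at hv
      exact ih hY.1 hY.2 v (by rwa [happ])
    · subst ha
      intro v hv
      rw [killsR, if_pos rfl] at hv
      rcases List.mem_cons.1 hv with rfl | hv'
      · rw [← happ, hY']; exact hal
      · exact ih hY.1 hY.2 v (by rwa [happ])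
    · subst ha
      intro v hv
      rw [killsR] at hv
      simp only [show (2 : Fin 3) ≠ 1 by decide, if_neg] at hv
      exact ih hY.1 hY.2 v (by rwa [happ])

lemma run_endL (hev : Ev ω m t) {X : ℤ × ℕ} {l : List (Fin 3)} {Z : ℤ × ℕ}
    (h : Run ω m t X l Z) : 1 ≤ X.2 → X.2 ≤ t →
    endL l = (2 * (Z.1 - X.1) + ((Z.2 : ℤ) - (X.2 : ℤ)), (Z.2 : ℤ) - (X.2 : ℤ)) := by
  induction h with
  | nil => intro _ _; simp [endL]; rfl
  | @cons X a Y l Z hs hr ih =>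
    intro h1 h2
    have hY := mstep_level ω m t hev hs h1 h2
    have IH := ih hY.1 hY.2
    have hstep : endL (a :: l) = stepDisp a + endL l := by simp [endL]
    rcases mstep_inv ω m t hs with ⟨ha, hm, hal, hY'⟩ | ⟨ha, hm, hal, hY'⟩ | ⟨ha, hm, hlt, hY'⟩
    · have hlev := alive_level ω m t hev h2 hm hal
      subst ha; subst hY'
      rw [hstep, IH]
      have h3 : ((X.2 - 1 : ℕ) : ℤ) = (X.2 : ℤ) - 1 := by omega
      have h4 : stepDisp 0 = (-1, -1) := rfl
      simp only [h4, Prod.mk_add_mk, Prod.mk.injEq, h3]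
      omega
    · subst ha; subst hY'
      rw [hstep, IH]
      have h4 : stepDisp 1 = (2, 0) := rfl
      simp only [h4, Prod.mk_add_mk, Prod.mk.injEq]
      omega
    · subst ha; subst hY'
      rw [hstep, IH]
      have h3 : ((X.2 + 1 : ℕ) : ℤ) = (X.2 : ℤ) + 1 := by omega
      have h4 : stepDisp 2 = (-1, 1) := rfl
      simp only [h4, Prod.mk_add_mk, Prod.mk.injEq, h3]
      omega

end StavC
end PartD

section PartE
namespace StavC

variable (ω : (ℤ × ℕ) → Bool) (m t : ℕ)

lemma spread_mem {s : ℕ} {c : ℤ} (hst : s + 1 ≤ t)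
    (hm : c ∈ Aset ω m t (s + 1)) (hal : ω (c, s + 1) = true) :
    c ∈ Aset ω m t s ∧ c + 1 ∈ Aset ω m t s := by
  rw [Aset_pred ω m t hst]
  exact mem_spread_of ω hm hal

lemma mstep_inv0 {X Y : ℤ × ℕ} (h : mstep ω m t X = some (0, Y)) :
    (X.1 + 1) ∈ Aset ω m t X.2 ∧ ω (X.1 + 1, X.2) = true ∧ Y = (X.1, X.2 - 1) := by
  rcases mstep_inv ω m t h with ⟨_, hm, hal, hY⟩ | ⟨ha, _, _, _⟩ | ⟨ha, _, _, _⟩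
  · exact ⟨hm, hal, hY⟩
  · exact absurd ha (by decide)
  · exact absurd ha (by decide)

lemma mstep_inv1 {X Y : ℤ × ℕ} (h : mstep ω m t X = some (1, Y)) :
    (X.1 + 1) ∈ Aset ω m t X.2 ∧ ω (X.1 + 1, X.2) = false ∧ Y = (X.1 + 1, X.2) := by
  rcases mstep_inv ω m t h with ⟨ha, _, _, _⟩ | ⟨_, hm, hal, hY⟩ | ⟨ha, _, _, _⟩
  · exact absurd ha (by decide)
  · exact ⟨hm, hal, hY⟩
  · exact absurd ha (by decide)

lemma mstep_inv2 {X Y : ℤ × ℕ} (h : mstep ω m t X = some (2, Y)) :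
    (X.1 + 1) ∉ Aset ω m t X.2 ∧ X.2 < t ∧ Y = (X.1 - 1, X.2 + 1) := by
  rcases mstep_inv ω m t h with ⟨ha, _, _, _⟩ | ⟨ha, _, _, _⟩ | ⟨_, hm, hlt, hY⟩
  · exact absurd ha (by decide)
  · exact absurd ha (by decide)
  · exact ⟨hm, hlt, hY⟩

lemma no_DU (hev : Ev ω m t) {X Y W : ℤ × ℕ} (h2 : X.2 ≤ t)
    (hXY : mstep ω m t X = some (0, Y)) (hYW : mstep ω m t Y = some (2, W)) : False := by
  obtain ⟨hm, hal, rfl⟩ := mstep_inv0 ω m t hXY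
  obtain ⟨hm2, _, _⟩ := mstep_inv2 ω m t hYW
  have hlev : 2 ≤ X.2 := alive_level ω m t hev h2 hm hal
  have hsp := spread_mem ω m t (s := X.2 - 1) (by omega)
    (by rwa [show X.2 - 1 + 1 = X.2 by omega]) (by rwa [show X.2 - 1 + 1 = X.2 by omega])
  exact hm2 hsp.1

lemma no_UD (hev : Ev ω m t) {X Y W : ℤ × ℕ}
    (hXY : mstep ω m t X = some (2, Y)) (hYW : mstep ω m t Y = some (0, W)) : False := by
  obtain ⟨hm, hlt, rfl⟩ := mstep_inv2 ω m t hXY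
  obtain ⟨hm2, hal2, _⟩ := mstep_inv0 ω m t hYW
  simp only [show X.1 - 1 + 1 = X.1 by ring] at hm2 hal2
  have hsp := spread_mem ω m t (s := X.2) hlt hm2 hal2
  exact hm hsp.2

lemma no_DRU (hev : Ev ω m t) {X Y W V : ℤ × ℕ} (h2 : X.2 ≤ t)
    (hXY : mstep ω m t X = some (0, Y)) (hYW : mstep ω m t Y = some (1, W))
    (hWV : mstep ω m t W = some (2, V)) : False := by
  obtain ⟨hm, hal, rfl⟩ := mstep_inv0 ω m t hXY
  obtain ⟨_, _, rfl⟩ := mstep_inv1 ω m t hYW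
  obtain ⟨hm3, _, _⟩ := mstep_inv2 ω m t hWV
  have hlev : 2 ≤ X.2 := alive_level ω m t hev h2 hm hal
  have hsp := spread_mem ω m t (s := X.2 - 1) (by omega)
    (by rwa [show X.2 - 1 + 1 = X.2 by omega]) (by rwa [show X.2 - 1 + 1 = X.2 by omega])
  exact hm3 (by simpa using hsp.2)

lemma no_URD (hev : Ev ω m t) {X Y W V : ℤ × ℕ}
    (hXY : mstep ω m t X = some (2, Y)) (hYW : mstep ω m t Y = some (1, W))
    (hWV : mstep ω m t W = some (0, V)) : False := by
  obtain ⟨hm, hlt, rfl⟩ := mstep_inv2 ω m t hXY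
  obtain ⟨_, _, rfl⟩ := mstep_inv1 ω m t hYW
  obtain ⟨hm3, hal3, _⟩ := mstep_inv0 ω m t hWV
  simp only [show X.1 - 1 + 1 = X.1 by ring] at hm3 hal3
  have hsp := spread_mem ω m t (s := X.2) hlt hm3 hal3
  exact hm hsp.1

lemma Run.head_step {X : ℤ × ℕ} {a : Fin 3} {l : List (Fin 3)} {Z : ℤ × ℕ}
    (h : Run ω m t X (a :: l) Z) : ∃ Y, mstep ω m t X = some (a, Y) ∧ Run ω m t Y l Z := by
  cases h with
  | cons hs hr => exact ⟨_, hs, hr⟩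

lemma run_nice (hev : Ev ω m t) {X : ℤ × ℕ} {l : List (Fin 3)} {Z : ℤ × ℕ}
    (h : Run ω m t X l Z) : 1 ≤ X.2 → X.2 ≤ t → NiceG l := by
  induction h with
  | nil => intro _ _ k; simp [NiceG]
  | @cons X a Y l Z hs hr ih =>
    intro h1 h2
    have hY := mstep_level ω m t hev hs h1 h2
    have IH := ih hY.1 hY.2
    intro k
    cases k with
    | succ k' =>
      simpa using IH k'
    | zero =>
      refine ⟨?_, ?_, ?_, ?_⟩
      · rintro ⟨ha, hb⟩
        simp at ha; subst ha
        match l, hb with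
        | b :: l', hb =>
          simp at hb; subst hb
          obtain ⟨W, hYW, _⟩ := Run.head_step ω m t hr
          exact no_DU ω m t hev h2 hs hYW
      · rintro ⟨ha, hb⟩
        simp at ha; subst ha
        match l, hb with
        | b :: l', hb =>
          simp at hb; subst hb
          obtain ⟨W, hYW, _⟩ := Run.head_step ω m t hr
          exact no_UD ω m t hev hs hYW
      · rintro ⟨ha, hb, hc⟩
        simp at ha; subst ha
        match l, hb, hc with
        | b :: c :: l', hb, hc =>
          simp at hb hc; subst hb; subst hc
          obtain ⟨W, hYW, hr2⟩ := Run.head_step ω m t hr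
          obtain ⟨V, hWV, _⟩ := Run.head_step ω m t hr2
          exact no_DRU ω m t hev h2 hs hYW hWV
      · rintro ⟨ha, hb, hc⟩
        simp at ha; subst ha
        match l, hb, hc with
        | b :: c :: l', hb, hc =>
          simp at hb hc; subst hb; subst hc
          obtain ⟨W, hYW, hr2⟩ := Run.head_step ω m t hr
          obtain ⟨V, hWV, _⟩ := Run.head_step ω m t hr2
          exact no_URD ω m t hev hs hYW hWV

end StavC
end PartE

section PartF
namespace StavC

variable (ω : (ℤ × ℕ) → Bool) (m t : ℕ)

lemma run_unique {X : ℤ × ℕ} {l l' : List (Fin 3)} {Z Z' : ℤ × ℕ}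
    (h : Run ω m t X l Z) (h' : Run ω m t X l' Z')
    (hZ : mstep ω m t Z = none) (hZ' : mstep ω m t Z' = none) : l = l' ∧ Z = Z' := by
  induction h generalizing l' with
  | nil =>
    cases h' with
    | nil => exact ⟨rfl, rfl⟩
    | cons hs _ => rw [hZ] at hs; cases hs
  | @cons X a Y l Z hs hr ih =>
    cases h' with
    | nil => rw [hZ'] at hs; cases hs
    | @cons _ a' Y' l'' _ hs' hr' =>
      rw [hs] at hs'
      injection hs' with hp
      cases hp
      obtain ⟨hl, hZ2⟩ := ih hr' hZ
      exact ⟨by rw [hl], hZ2⟩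

lemma run_visit {Y : ℤ × ℕ} {l : List (Fin 3)} {Z X : ℤ × ℕ}
    (h : Run ω m t Y l Z) (hX : X ∈ statesL Y l) :
    ∃ l', Run ω m t X l' Z ∧ l'.length ≤ l.length := by
  induction h with
  | nil =>
    simp [statesL] at hX
    subst hX
    exact ⟨[], .nil _, le_rfl⟩
  | @cons Y a Y' l Z hs hr ih =>
    rw [statesL, ← mstep_app ω m t hs] at hX
    rcases List.mem_cons.1 hX with rfl | hX'
    · exact ⟨a :: l, .cons hs hr, le_rfl⟩
    · obtain ⟨l', h', hlen⟩ := ih hX'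
      exact ⟨l', h', by simp; omega⟩

lemma run_nodup {X : ℤ × ℕ} {l : List (Fin 3)} {Z : ℤ × ℕ}
    (h : Run ω m t X l Z) (hZ : mstep ω m t Z = none) : (statesL X l).Nodup := by
  induction h with
  | nil => simp [statesL]
  | @cons X a Y l Z hs hr ih =>
    rw [statesL, ← mstep_app ω m t hs]
    refine List.nodup_cons.2 ⟨?_, ih hZ⟩
    intro hX
    obtain ⟨l', h', hlen⟩ := run_visit ω m t hr hX
    have := run_unique ω m t h' (.cons hs hr) hZ hZ
    rw [this.1] at hlen
    simp at hlen

lemma run_kills_nodup {X : ℤ × ℕ} {l : List (Fin 3)} {Z : ℤ × ℕ}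
    (h : Run ω m t X l Z) (hZ : mstep ω m t Z = none) : (killsR X l).Nodup := by
  have h1 := run_nodup ω m t h hZ
  exact ((killsR_sublist_tail X l).trans (List.tail_sublist _)).nodup h1

end StavC
end PartF

section PartG
namespace StavC

variable (ω : (ℤ × ℕ) → Bool) (m t : ℕ)

theorem construction (hev : Ev ω m t) (ht : 1 ≤ t) (hm : 1 ≤ m) :
    ∃ l : List (Fin 3), 1 ≤ l.length ∧ NiceG l ∧ (killsR ((0:ℤ), t) l).Nodup ∧
      (∀ v ∈ killsR ((0:ℤ), t) l, ω v = false) ∧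
      2 * (m : ℤ) ≤ (endL l).1 ∧ (endL l).2 = 0 := by
  obtain ⟨w, y, h⟩ := proc_exists ω m t hev t le_rfl 0
  have hle := Proc.le_exit ω m t h
  have hy : (m : ℤ) ≤ y := by
    by_contra hc
    push_neg at hc
    apply hle.2
    rw [Aset_t, Finset.mem_Icc]
    constructor <;> omega
  have hrun := h.run ω m t le_rfl
  have hnone : mstep ω m t (y, t) = none :=
    mstep_none ω m t (by simpa using hle.2) (lt_irrefl t)
  refine ⟨w, ?_, ?_, ?_, ?_, ?_, ?_⟩
  · rcases w with _ | ⟨a, w'⟩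
    · exfalso
      cases hrun with
      | nil => simp at *; omega
    · simp
  · exact run_nice ω m t hev hrun ht le_rfl
  · exact run_kills_nodup ω m t hrun hnone
  · exact run_kills ω m t hev hrun ht le_rfl
  · rw [run_endL ω m t hev hrun ht le_rfl]
    simp
    omega
  · rw [run_endL ω m t hev hrun ht le_rfl]
    simp

end StavC
end PartG

section PartH
namespace StavC

lemma endpoint_eq_endL {n : ℕ} (w : Fin n → Fin 3) :
    endpointOf w = endL (List.ofFn w) := by
  unfold endpointOf endL
  rw [List.map_ofFn]
  exact List.sum_ofFn.symm

lemma count_ofFn_card {n : ℕ} (w : Fin n → Fin 3) (r : Fin 3) :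
    (List.ofFn w).count r = (Finset.univ.filter fun s => w s = r).card := by
  classical
  induction n with
  | zero => simp
  | succ n ih =>
    rw [List.ofFn_succ, List.count_cons, ih (fun i => w i.succ)]
    rw [Finset.card_filter, Finset.card_filter, Fin.sum_univ_succ]
    simp only [beq_iff_eq]
    exact add_comm _ _

lemma NiceG.toPath {n : ℕ} {l : List (Fin 3)} (hl : NiceG l) (w : Fin n → Fin 3)
    (hw : ∀ k : Fin n, l[(k : ℕ)]? = some (w k)) : NicePath w := by
  intro k
  constructor
  · intro hk1
    have h0 := hw ⟨k, by omega⟩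
    have h1 := hw ⟨k + 1, hk1⟩
    have H := hl k
    constructor
    · rintro ⟨e0, e2⟩
      rw [e0] at h0; rw [e2] at h1
      exact H.1 ⟨h0, h1⟩
    · rintro ⟨e0, e2⟩
      rw [e0] at h0; rw [e2] at h1
      exact H.2.1 ⟨h0, h1⟩
  · intro hk2
    have h0 := hw ⟨k, by omega⟩
    have h1 := hw ⟨k + 1, by omega⟩
    have h2 := hw ⟨k + 2, hk2⟩
    have H := hl k
    constructor
    · rintro ⟨e0, e1, e2⟩
      rw [e0] at h0; rw [e1] at h1; rw [e2] at h2
      exact H.2.2.1 ⟨h0, h1, h2⟩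
    · rintro ⟨e0, e1, e2⟩
      rw [e0] at h0; rw [e1] at h1; rw [e2] at h2
      exact H.2.2.2 ⟨h0, h1, h2⟩

open Classical in
/-- Good words: nice, endpoint in the right region, loop-free kill decoding. -/
def GoodW (m t : ℕ) {n : ℕ} (w : Fin n → Fin 3) : Prop :=
  NicePath w ∧ 2 * (m : ℤ) ≤ (endpointOf w).1 ∧ 0 ≤ (endpointOf w).2 ∧
    (killsR ((0 : ℤ), t) (List.ofFn w)).Nodup

open Classical in
def Aev (m t : ℕ) {n : ℕ} (w : Fin n → Fin 3) : Set ((ℤ × ℕ) → Bool) :=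
  if GoodW m t w then
    {ω | ∀ v ∈ (killsR ((0 : ℤ), t) (List.ofFn w)).toFinset, ω v = false}
  else ∅

lemma coverage (m t : ℕ) (hm : 1 ≤ m) (ht : 1 ≤ t) :
    {ω : (ℤ × ℕ) → Bool | Ev ω m t} ⊆
      ⋃ σ : (Σ n : ℕ, Fin (n + 1) → Fin 3), Aev m t σ.2 := by
  intro ω hev
  obtain ⟨l, hlen, hnice, hnd, hkill, he1, he2⟩ := construction ω m t hev ht hm
  obtain ⟨n, hn⟩ : ∃ n, l.length = n + 1 := ⟨l.length - 1, by omega⟩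
  set w : Fin (n + 1) → Fin 3 := fun k => l.get (Fin.cast hn.symm k) with hwdef
  have hofn : List.ofFn w = l := by
    apply List.ext_get (by simp [hn])
    intro i h1 h2
    rw [List.get_ofFn]
    rfl
  have hget : ∀ k : Fin (n + 1), l[(k : ℕ)]? = some (w k) := by
    intro k
    rw [List.getElem?_eq_getElem (show (k : ℕ) < l.length by omega)]
    rfl
  have hgood : GoodW m t w := by
    refine ⟨NiceG.toPath hnice w hget, ?_, ?_, ?_⟩
    · rw [endpoint_eq_endL, hofn]; exact he1
    · rw [endpoint_eq_endL, hofn, he2]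
    · rw [hofn]; exact hnd
  refine Set.mem_iUnion.2 ⟨⟨n, w⟩, ?_⟩
  rw [Aev, if_pos hgood]
  intro v hv
  rw [List.mem_toFinset, hofn] at hv
  exact hkill v hv

end StavC
end PartH

section PartI
namespace StavC

lemma Aev_measure {α : ℝ} (hα0 : 0 ≤ α) {P : Measure ((ℤ × ℕ) → Bool)}
    (hP : IsBernoulliNoise α P) (m t : ℕ) {n : ℕ} (w : Fin n → Fin 3) :
    P (Aev m t w) ≤ ENNReal.ofReal (pathWeight α w) := by
  rw [Aev]
  split_ifs with hg
  · have hprod := hP.2 ((killsR ((0 : ℤ), t) (List.ofFn w)).toFinset) (fun _ => false)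
    have hset : {ω : (ℤ × ℕ) → Bool | ∀ v ∈ (killsR ((0 : ℤ), t) (List.ofFn w)).toFinset,
        ω v = (fun _ => false) v} =
        {ω : (ℤ × ℕ) → Bool | ∀ v ∈ (killsR ((0 : ℤ), t) (List.ofFn w)).toFinset,
        ω v = false} := rfl
    rw [hset] at hprod
    rw [hprod]
    apply le_of_eq
    have hcard : (killsR ((0 : ℤ), t) (List.ofFn w)).toFinset.card
        = (Finset.univ.filter fun s => w s = 1).card := by
      rw [List.toFinset_card_of_nodup hg.2.2.2, killsR_length, count_ofFn_card]
    calc ∏ v ∈ (killsR ((0 : ℤ), t) (List.ofFn w)).toFinset,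
          ENNReal.ofReal (if (fun _ => false) v then 1 - α else α)
        = ∏ _v ∈ (killsR ((0 : ℤ), t) (List.ofFn w)).toFinset, ENNReal.ofReal α := by
          apply Finset.prod_congr rfl
          intro v _
          simp
      _ = ENNReal.ofReal α ^ (killsR ((0 : ℤ), t) (List.ofFn w)).toFinset.card :=
          Finset.prod_const _
      _ = ENNReal.ofReal (pathWeight α w) := by
          rw [hcard, ← ENNReal.ofReal_pow hα0, pathWeight]
  · simp

lemma measurable_bool_and {X : Type*} [MeasurableSpace X] {f g : X → Bool}
    (hf : Measurable f) (hg : Measurable g) : Measurable (fun x => f x && g x) := by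
  apply measurable_to_countable'
  intro y
  cases y
  · have : (fun x => f x && g x) ⁻¹' {false} =
        (f ⁻¹' {true} ∩ g ⁻¹' {true})ᶜ := by
      ext x; simp [Bool.and_eq_true]
    rw [this]
    exact ((hf (measurableSet_singleton true)).inter (hg (measurableSet_singleton true))).compl
  · have : (fun x => f x && g x) ⁻¹' {true} = f ⁻¹' {true} ∩ g ⁻¹' {true} := by
      ext x; simp [Bool.and_eq_true]
    rw [this]
    exact (hf (measurableSet_singleton true)).inter (hg (measurableSet_singleton true))

lemma measurable_bool_or {X : Type*} [MeasurableSpace X] {f g : X → Bool}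
    (hf : Measurable f) (hg : Measurable g) : Measurable (fun x => f x || g x) := by
  apply measurable_to_countable'
  intro y
  cases y
  · have : (fun x => f x || g x) ⁻¹' {false} =
        (f ⁻¹' {true} ∪ g ⁻¹' {true})ᶜ := by
      ext x; simp [Bool.or_eq_true]
    rw [this]
    exact ((hf (measurableSet_singleton true)).union (hg (measurableSet_singleton true))).compl
  · have : (fun x => f x || g x) ⁻¹' {true} = f ⁻¹' {true} ∪ g ⁻¹' {true} := by
      ext x; simp [Bool.or_eq_true]
    rw [this]
    exact (hf (measurableSet_singleton true)).union (hg (measurableSet_singleton true))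

lemma measurable_stavState_coord (t : ℕ) (i : ℤ) :
    Measurable (fun ω : (ℤ × ℕ) → Bool => stavState t ω i) := by
  induction t generalizing i with
  | zero => simpa [stavState] using measurable_const
  | succ t ih =>
    have h1 : Measurable (fun ω : (ℤ × ℕ) → Bool =>
        stavState t ω i || stavState t ω (i + 1)) := measurable_bool_or (ih i) (ih (i + 1))
    have h2 : Measurable (fun ω : (ℤ × ℕ) → Bool => ω (i, t + 1)) :=
      measurable_pi_apply _
    exact measurable_bool_and h1 h2

lemma measurable_stavState (t : ℕ) : Measurable (stavState t) :=
  measurable_pi_lambda _ (fun i => measurable_stavState_coord t i)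

lemma measurable_event (m : ℕ) :
    MeasurableSet {x : ℤ → Bool | ∀ i : ℤ, 1 ≤ i → i ≤ (m : ℤ) → x i = false} := by
  have : {x : ℤ → Bool | ∀ i : ℤ, 1 ≤ i → i ≤ (m : ℤ) → x i = false} =
      ⋂ i : ℤ, {x : ℤ → Bool | 1 ≤ i → i ≤ (m : ℤ) → x i = false} := by
    ext x; simp
  rw [this]
  apply MeasurableSet.iInter
  intro i
  by_cases h1 : 1 ≤ i
  · by_cases h2 : i ≤ (m : ℤ)
    · have : {x : ℤ → Bool | 1 ≤ i → i ≤ (m : ℤ) → x i = false} =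
          (fun x : ℤ → Bool => x i) ⁻¹' {false} := by
        ext x; simp [h1, h2]
      rw [this]
      exact measurable_pi_apply i (measurableSet_singleton false)
    · have : {x : ℤ → Bool | 1 ≤ i → i ≤ (m : ℤ) → x i = false} = Set.univ := by
        ext x; simp [h2]
      rw [this]; exact MeasurableSet.univ
  · have : {x : ℤ → Bool | 1 ≤ i → i ≤ (m : ℤ) → x i = false} = Set.univ := by
      ext x; simp [h1]
    rw [this]; exact MeasurableSet.univ

end StavC
end PartI

section PartJ
namespace StavC

lemma pathWeight_nonneg {α : ℝ} (hα0 : 0 ≤ α) {n : ℕ} (w : Fin n → Fin 3) :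
    0 ≤ pathWeight α w := pow_nonneg hα0 _

lemma stepDisp_bounds (a : Fin 3) : -2 ≤ (stepDisp a).1 ∧ (stepDisp a).1 ≤ 2 ∧
    -1 ≤ (stepDisp a).2 ∧ (stepDisp a).2 ≤ 1 := by
  fin_cases a <;> norm_num [stepDisp]

lemma endpoint_mem_box {N : ℕ} (w : Fin N → Fin 3) :
    (endpointOf w).1 ∈ Finset.Icc (-(2 * (N : ℤ))) (2 * N) ∧
    (endpointOf w).2 ∈ Finset.Icc (-(N : ℤ)) (N : ℤ) := by
  have h1 : (endpointOf w).1 = ∑ s, (stepDisp (w s)).1 := by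
    rw [endpointOf]; exact Prod.fst_sum
  have h2 : (endpointOf w).2 = ∑ s, (stepDisp (w s)).2 := by
    rw [endpointOf]; exact Prod.snd_sum
  have hub1 : ∑ s, (stepDisp (w s)).1 ≤ ∑ _s : Fin N, (2 : ℤ) :=
    Finset.sum_le_sum (fun s _ => (stepDisp_bounds (w s)).2.1)
  have hlb1 : ∑ _s : Fin N, (-2 : ℤ) ≤ ∑ s, (stepDisp (w s)).1 :=
    Finset.sum_le_sum (fun s _ => (stepDisp_bounds (w s)).1)
  have hub2 : ∑ s, (stepDisp (w s)).2 ≤ ∑ _s : Fin N, (1 : ℤ) :=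
    Finset.sum_le_sum (fun s _ => (stepDisp_bounds (w s)).2.2.2)
  have hlb2 : ∑ _s : Fin N, (-1 : ℤ) ≤ ∑ s, (stepDisp (w s)).2 :=
    Finset.sum_le_sum (fun s _ => (stepDisp_bounds (w s)).2.2.1)
  simp only [Finset.sum_const, Finset.card_univ, Fintype.card_fin, nsmul_eq_mul] at hub1 hlb1 hub2 hlb2
  rw [Finset.mem_Icc, Finset.mem_Icc, h1, h2]
  omega

lemma Spath_eq_zero (α : ℝ) {i τ : ℤ} (N : ℕ) (r : Fin 3)
    (h : i ∉ Finset.Icc (-(2 * (N : ℤ))) (2 * N) ∨ τ ∉ Finset.Icc (-(N : ℤ)) (N : ℤ)) :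
    Spath α i τ N r = 0 := by
  classical
  rw [Spath]
  have hemp : (Finset.univ.filter
      (fun w : Fin N → Fin 3 =>
        NicePath w ∧ endpointOf w = (i, τ) ∧ ∀ hh : N - 1 < N, w ⟨N - 1, hh⟩ = r)) = ∅ := by
    rw [Finset.filter_eq_empty_iff]
    rintro w - ⟨-, hend, -⟩
    have hb := endpoint_mem_box w
    rw [hend] at hb
    rcases h with h | h
    · exact h hb.1
    · exact h hb.2
  rw [hemp, Finset.sum_empty]

lemma Sgen_eq_sum (α p q : ℝ) (N : ℕ) (r : Fin 3) :
    Sgen α p q r N =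
      ∑ b ∈ (Finset.Icc (-(2 * (N : ℤ))) (2 * N)) ×ˢ (Finset.Icc (-(N : ℤ)) (N : ℤ)),
        p ^ b.1 * q ^ b.2 * Spath α b.1 b.2 N r := by
  rw [Sgen]
  have hout : ∀ i : ℤ, ∑' τ : ℤ, p ^ i * q ^ τ * Spath α i τ N r
      = ∑ τ ∈ Finset.Icc (-(N : ℤ)) (N : ℤ), p ^ i * q ^ τ * Spath α i τ N r := by
    intro i
    apply tsum_eq_sum
    intro τ hτ
    rw [Spath_eq_zero α N r (Or.inr hτ), mul_zero]
  rw [tsum_congr hout]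
  rw [tsum_eq_sum (s := Finset.Icc (-(2 * (N : ℤ))) (2 * N))
    (fun i hi => Finset.sum_eq_zero
      (fun τ _ => by rw [Spath_eq_zero α N r (Or.inl hi), mul_zero]))]
  rw [Finset.sum_product]

open Classical in
lemma weight_bound (α p q : ℝ) (hα0 : 0 ≤ α) (hp : 1 < p) (hq : 1 ≤ q) (m t : ℕ)
    (N : ℕ) (hN : 1 ≤ N) :
    ∑ w ∈ Finset.univ.filter (fun w : Fin N → Fin 3 => GoodW m t w), pathWeight α w ≤
      p ^ (-(2 * (m : ℤ))) * (Sgen α p q 0 N + Sgen α p q 1 N + Sgen α p q 2 N) := by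
  classical
  have hp0 : (0 : ℝ) < p := by linarith
  have step1 : ∀ w ∈ Finset.univ.filter (fun w : Fin N → Fin 3 => GoodW m t w),
      pathWeight α w ≤
      p ^ (-(2 * (m : ℤ))) * (p ^ (endpointOf w).1 * q ^ (endpointOf w).2 * pathWeight α w) := by
    intro w hw
    rw [Finset.mem_filter] at hw
    obtain ⟨-, hgood⟩ := hw
    have e1 : (1 : ℝ) ≤ p ^ ((endpointOf w).1 - 2 * (m : ℤ)) :=
      one_le_zpow₀ (le_of_lt hp) (by have := hgood.2.1; omega)
    have e2 : (1 : ℝ) ≤ q ^ (endpointOf w).2 :=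
      one_le_zpow₀ hq hgood.2.2.1
    have epw : 0 ≤ pathWeight α w := pathWeight_nonneg hα0 w
    have hfac : (1 : ℝ) ≤ p ^ ((endpointOf w).1 - 2 * (m : ℤ)) * q ^ (endpointOf w).2 := by
      calc (1 : ℝ) = 1 * 1 := by ring
        _ ≤ _ := mul_le_mul e1 e2 (by norm_num) (by positivity)
    calc pathWeight α w = 1 * pathWeight α w := by ring
      _ ≤ (p ^ ((endpointOf w).1 - 2 * (m : ℤ)) * q ^ (endpointOf w).2) * pathWeight α w :=
        mul_le_mul_of_nonneg_right hfac epw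
      _ = p ^ (-(2 * (m : ℤ))) * (p ^ (endpointOf w).1 * q ^ (endpointOf w).2 * pathWeight α w) := by
        rw [show (endpointOf w).1 - 2 * (m : ℤ) = -(2 * (m : ℤ)) + (endpointOf w).1 by ring,
          zpow_add₀ (ne_of_gt hp0)]
        ring
  refine (Finset.sum_le_sum step1).trans ?_
  rw [← Finset.mul_sum]
  apply mul_le_mul_of_nonneg_left ?_ (zpow_nonneg hp0.le _)
  have hlt : N - 1 < N := by omega
  rw [← Finset.sum_fiberwise_of_maps_to
    (g := fun w : Fin N → Fin 3 => w ⟨N - 1, hlt⟩) (t := Finset.univ)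
    (fun _ _ => Finset.mem_univ _)
    (fun w => p ^ (endpointOf w).1 * q ^ (endpointOf w).2 * pathWeight α w)]
  rw [Fin.sum_univ_three]
  have key : ∀ r : Fin 3,
      ∑ w ∈ (Finset.univ.filter (fun w : Fin N → Fin 3 => GoodW m t w)).filter
          (fun w => w ⟨N - 1, hlt⟩ = r),
        p ^ (endpointOf w).1 * q ^ (endpointOf w).2 * pathWeight α w ≤ Sgen α p q r N := by
    intro r
    rw [Sgen_eq_sum α p q N r]
    rw [← Finset.sum_fiberwise_of_maps_to
      (g := fun w : Fin N → Fin 3 => endpointOf w)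
      (t := (Finset.Icc (-(2 * (N : ℤ))) (2 * N)) ×ˢ (Finset.Icc (-(N : ℤ)) (N : ℤ)))
      (fun w _ => Finset.mem_product.2 (endpoint_mem_box w))
      (fun w => p ^ (endpointOf w).1 * q ^ (endpointOf w).2 * pathWeight α w)]
    apply Finset.sum_le_sum
    intro b _
    have hcongr : ∀ w ∈ (((Finset.univ.filter (fun w : Fin N → Fin 3 => GoodW m t w)).filter
        (fun w => w ⟨N - 1, hlt⟩ = r)).filter (fun w => endpointOf w = b)),
        p ^ (endpointOf w).1 * q ^ (endpointOf w).2 * pathWeight α w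
          = p ^ b.1 * q ^ b.2 * pathWeight α w := by
      intro w hw
      rw [Finset.mem_filter] at hw
      rw [hw.2]
    rw [Finset.sum_congr rfl hcongr]
    have hfactor : ∑ w ∈ (((Finset.univ.filter (fun w : Fin N → Fin 3 => GoodW m t w)).filter
        (fun w => w ⟨N - 1, hlt⟩ = r)).filter (fun w => endpointOf w = b)),
        p ^ b.1 * q ^ b.2 * pathWeight α w
        = p ^ b.1 * q ^ b.2 * ∑ w ∈ (((Finset.univ.filter
            (fun w : Fin N → Fin 3 => GoodW m t w)).filter
            (fun w => w ⟨N - 1, hlt⟩ = r)).filter (fun w => endpointOf w = b)),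
          pathWeight α w := by
      rw [Finset.mul_sum]
    rw [hfactor]
    apply mul_le_mul_of_nonneg_left ?_ (by positivity)
    rw [Spath]
    apply Finset.sum_le_sum_of_subset_of_nonneg
    · intro w hw
      rw [Finset.mem_filter] at hw ⊢
      obtain ⟨hw1, hend⟩ := hw
      rw [Finset.mem_filter] at hw1
      obtain ⟨hw2, hlast⟩ := hw1
      rw [Finset.mem_filter] at hw2
      refine ⟨Finset.mem_univ _, hw2.2.1, ?_, ?_⟩
      · rw [hend]
      · intro hh; exact hlast
    · intro w _ _
      exact pathWeight_nonneg hα0 w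
  exact add_le_add (add_le_add (key 0) (key 1)) (key 2)

end StavC
end PartJ

/-- For every `α ∈ [0,1]`, all reals `p > 1` and `q ≥ 1`, every integer
`m ≥ 1` and every `t ≥ 0`, the probability under `δ₁ Stav^t` that the components at
positions `1, …, m` are all `0` is at most
`p^{−2m} · Σ_{n=1}^∞ (S_1(n) + S_2(n) + S_3(n))`, interpreted in `[0, ∞]`. -/
theorem stavskaya_generating_bound (α : ℝ) (hα0 : 0 ≤ α) (hα1 : α ≤ 1)
    (p q : ℝ) (hp : 1 < p) (hq : 1 ≤ q)
    (P : Measure ((ℤ × ℕ) → Bool)) (hP : IsBernoulliNoise α P)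
    (m : ℕ) (hm : 1 ≤ m) (t : ℕ) :
    stavLaw P t {x : ℤ → Bool | ∀ i : ℤ, 1 ≤ i → i ≤ (m : ℤ) → x i = false} ≤
      ENNReal.ofReal (p ^ (-(2 * (m : ℤ)))) *
        ∑' n : ℕ, ENNReal.ofReal (Sgen α p q 0 (n + 1) + Sgen α p q 1 (n + 1) +
          Sgen α p q 2 (n + 1)) := by
    classical
  rw [stavLaw, Measure.map_apply (StavC.measurable_stavState t) (StavC.measurable_event m)]
  have hpre : stavState t ⁻¹' {x : ℤ → Bool | ∀ i : ℤ, 1 ≤ i → i ≤ (m : ℤ) → x i = false}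
      = {ω : (ℤ × ℕ) → Bool | StavC.Ev ω m t} := rfl
  rw [hpre]
  rcases Nat.eq_zero_or_pos t with rfl | ht
  · have hemp : {ω : (ℤ × ℕ) → Bool | StavC.Ev ω m 0} = ∅ := by
      ext ω
      simp only [Set.mem_setOf_eq, Set.mem_empty_iff_false, iff_false]
      intro hev
      have := hev 1 le_rfl (by exact_mod_cast hm)
      simp [stavState] at this
    rw [hemp, measure_empty]
    exact zero_le
  · calc P {ω : (ℤ × ℕ) → Bool | StavC.Ev ω m t}
        ≤ P (⋃ σ : (Σ n : ℕ, Fin (n + 1) → Fin 3), StavC.Aev m t σ.2) :=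
          measure_mono (StavC.coverage m t hm ht)
      _ ≤ ∑' σ : (Σ n : ℕ, Fin (n + 1) → Fin 3), P (StavC.Aev m t σ.2) :=
          measure_iUnion_le _
      _ = ∑' n : ℕ, ∑' w : Fin (n + 1) → Fin 3, P (StavC.Aev m t w) :=
          ENNReal.tsum_sigma' _
      _ ≤ ∑' n : ℕ, ENNReal.ofReal (p ^ (-(2 * (m : ℤ))) *
            (Sgen α p q 0 (n + 1) + Sgen α p q 1 (n + 1) + Sgen α p q 2 (n + 1))) := by
          apply ENNReal.tsum_le_tsum
          intro n
          rw [tsum_fintype]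
          have h1 : ∀ w : Fin (n + 1) → Fin 3, P (StavC.Aev m t w) ≤
              (if StavC.GoodW m t w then ENNReal.ofReal (pathWeight α w) else 0) := by
            intro w
            by_cases hg : StavC.GoodW m t w
            · rw [if_pos hg]
              exact StavC.Aev_measure hα0 hP m t w
            · rw [if_neg hg, StavC.Aev, if_neg hg]
              simp
          calc ∑ w : Fin (n + 1) → Fin 3, P (StavC.Aev m t w)
              ≤ ∑ w : Fin (n + 1) → Fin 3,
                (if StavC.GoodW m t w then ENNReal.ofReal (pathWeight α w) else 0) :=
                Finset.sum_le_sum (fun w _ => h1 w)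
            _ = ∑ w ∈ Finset.univ.filter (fun w : Fin (n + 1) → Fin 3 => StavC.GoodW m t w),
                ENNReal.ofReal (pathWeight α w) := (Finset.sum_filter _ _).symm
            _ = ENNReal.ofReal (∑ w ∈ Finset.univ.filter
                (fun w : Fin (n + 1) → Fin 3 => StavC.GoodW m t w), pathWeight α w) :=
                (ENNReal.ofReal_sum_of_nonneg
                  (fun w _ => StavC.pathWeight_nonneg hα0 w)).symm
            _ ≤ ENNReal.ofReal (p ^ (-(2 * (m : ℤ))) *
                (Sgen α p q 0 (n + 1) + Sgen α p q 1 (n + 1) + Sgen α p q 2 (n + 1))) :=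
                ENNReal.ofReal_le_ofReal
                  (StavC.weight_bound α p q hα0 hp hq m t (n + 1) (by omega))
      _ = ENNReal.ofReal (p ^ (-(2 * (m : ℤ)))) *
          ∑' n : ℕ, ENNReal.ofReal (Sgen α p q 0 (n + 1) + Sgen α p q 1 (n + 1) +
            Sgen α p q 2 (n + 1)) := by
          rw [← ENNReal.tsum_mul_left]
          apply tsum_congr
          intro n
          rw [ENNReal.ofReal_mul (zpow_nonneg (by linarith) _)]

end
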